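/- Fix ρ ∈ ℝ with ρ ≠ 1. The derivative of the cost function satisfies (J_ρ²)′(x) = (f_ρ(x) − x)(f_ρ′(x) − 1) for all x ∈ ℝ, and f_ρ′(x) = 1 holds exactly for x ∈ {x₋, x₊}. Consequently, the set of critical points of J_ρ² is exactly the union of the fixed-point set {x : f_ρ(x) = x} with the two parameter-independent points {x₋, x₊} = {(9 − √33)/24, (9 + √33)/24}. -/

import Mathlib

/-- The one-parameter family of polynomial maps `f_ρ`. -/
noncomputable def fmap (ρ x : ℝ) : ℝ :=
  (ρ - 1) * (8 * x ^ 3 - 9 * x ^ 2) + 2 * ρ * x - x + ρ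

/-- The cost function `J_ρ²(x) = (1/2)(f_ρ(x) - x)²`. -/
noncomputable def Jsq (ρ x : ℝ) : ℝ := (1 / 2) * (fmap ρ x - x) ^ 2

lemma fmap_hasDerivAt (ρ x : ℝ) :
    HasDerivAt (fmap ρ) ((ρ - 1) * (24 * x ^ 2 - 18 * x) + 2 * ρ - 1) x := by
  have h : HasDerivAt (fun x : ℝ => (ρ - 1) * (8 * x ^ 3 - 9 * x ^ 2) + 2 * ρ * x - x + ρ)
      ((ρ - 1) * (8 * (↑(3:ℕ) * x ^ (3 - 1)) - 9 * (↑(2:ℕ) * x ^ (2 - 1))) + 2 * ρ * 1 - 1) x := by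
    simpa using (((((hasDerivAt_pow 3 x).const_mul 8).sub
      ((hasDerivAt_pow 2 x).const_mul 9)).const_mul (ρ - 1)).add
      ((hasDerivAt_id x).const_mul (2 * ρ))).sub (hasDerivAt_id x) |>.add_const ρ
  convert h using 1
  · rfl
  push_cast
  ring

lemma fmap_deriv (ρ x : ℝ) :
    deriv (fmap ρ) x = (ρ - 1) * (24 * x ^ 2 - 18 * x) + 2 * ρ - 1 :=
  (fmap_hasDerivAt ρ x).deriv

lemma Jsq_deriv (ρ x : ℝ) :
    deriv (Jsq ρ) x = (fmap ρ x - x) * (deriv (fmap ρ) x - 1) := by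
  have hg : HasDerivAt (fun x => fmap ρ x - x)
      (((ρ - 1) * (24 * x ^ 2 - 18 * x) + 2 * ρ - 1) - 1) x :=
    (fmap_hasDerivAt ρ x).sub (hasDerivAt_id x)
  have hJ : HasDerivAt (Jsq ρ)
      ((1 / 2) * ((2 : ℕ) * (fmap ρ x - x) ^ (2 - 1) *
        (((ρ - 1) * (24 * x ^ 2 - 18 * x) + 2 * ρ - 1) - 1))) x := (hg.pow 2).const_mul (1 / 2)
  rw [hJ.deriv, fmap_deriv]
  ring

lemma fmap_deriv_eq_one (ρ : ℝ) (hρ : ρ ≠ 1) (x : ℝ) :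
    deriv (fmap ρ) x = 1 ↔
      (x = (9 - Real.sqrt 33) / 24 ∨ x = (9 + Real.sqrt 33) / 24) := by
  have hs : Real.sqrt 33 ^ 2 = 33 := Real.sq_sqrt (by norm_num)
  rw [fmap_deriv]
  constructor
  · intro h
    have h2 : (ρ - 1) * (24 * ((x - (9 - Real.sqrt 33) / 24) * (x - (9 + Real.sqrt 33) / 24))) = 0 := by
      linear_combination h - ((ρ - 1) / 24) * hs
    rcases mul_eq_zero.1 h2 with h3 | h3
    · exact absurd (by linarith [sub_eq_zero.1 h3]) hρ
    · have h4 : (x - (9 - Real.sqrt 33) / 24) * (x - (9 + Real.sqrt 33) / 24) = 0 := by linarith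
      rcases mul_eq_zero.1 h4 with h5 | h5
      · exact Or.inl (by linarith)
      · exact Or.inr (by linarith)
  · rintro (rfl | rfl) <;> linear_combination ((ρ - 1) / 24) * hs

theorem stmt_5 (ρ : ℝ) (hρ : ρ ≠ 1) :
    (∀ x : ℝ, deriv (Jsq ρ) x = (fmap ρ x - x) * (deriv (fmap ρ) x - 1)) ∧
    ({x : ℝ | deriv (fmap ρ) x = 1} =
      {(9 - Real.sqrt 33) / 24, (9 + Real.sqrt 33) / 24}) ∧
    ({x : ℝ | deriv (Jsq ρ) x = 0} =
      {x : ℝ | fmap ρ x = x} ∪ {(9 - Real.sqrt 33) / 24, (9 + Real.sqrt 33) / 24}) := by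
  refine ⟨Jsq_deriv ρ, ?_, ?_⟩
  · ext x
    simpa using fmap_deriv_eq_one ρ hρ x
  · ext x
    simp only [Set.mem_setOf_eq, Set.mem_union, Set.mem_insert_iff, Set.mem_singleton_iff]
    rw [Jsq_deriv, mul_eq_zero, sub_eq_zero, sub_eq_zero, fmap_deriv_eq_one ρ hρ x]
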